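/- Let R be a commutative ring and P ∈ R. Then the quotient ring R[X,Y]/(XY − P) is a free R-module with basis given by the images of the monomials {1} ∪ {X^i : i ≥ 1} ∪ {Y^j : j ≥ 1}. In particular, R[X,Y]/(XY − P) is flat as an R-module. -/

import Mathlib

open MvPolynomial

noncomputable section XYQuotAux

namespace XYQuotAux

variable {R : Type*} [CommRing R] (P : R)

/-- The ideal `(XY - P)`. -/
abbrev I : Ideal (MvPolynomial (Fin 2) R) :=
  Ideal.span {(X 0 : MvPolynomial (Fin 2) R) * X 1 - C P}

/-- The quotient ring. -/
abbrev Q := MvPolynomial (Fin 2) R ⧸ I P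

/-- The candidate basis vectors. -/
def e (n : ℤ) : Q P := Ideal.Quotient.mk _
  (if 0 ≤ n then (X 0 : MvPolynomial (Fin 2) R) ^ n.toNat
    else (X 1 : MvPolynomial (Fin 2) R) ^ (-n).toNat)

lemma e_coe (k : ℕ) : e P (k : ℤ) = Ideal.Quotient.mk _ ((X 0 : MvPolynomial (Fin 2) R) ^ k) := by
  rw [e, if_pos (by positivity)]
  simp

lemma e_neg_coe (k : ℕ) :
    e P (-(k : ℤ)) = Ideal.Quotient.mk _ ((X 1 : MvPolynomial (Fin 2) R) ^ k) := by
  rcases Nat.eq_zero_or_pos k with h | h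
  · subst h; rw [e, if_pos (by simp)]; simp
  · rw [e, if_neg (by omega)]
    simp

/-- Values of the "normal form" map on monomials. -/
def g (d : Fin 2 →₀ ℕ) : ℤ →₀ R :=
  P ^ min (d 0) (d 1) • Finsupp.single ((d 0 : ℤ) - (d 1 : ℤ)) (1 : R)

/-- The normal form linear map. -/
def T : MvPolynomial (Fin 2) R →ₗ[R] (ℤ →₀ R) :=
  (MvPolynomial.basisMonomials (Fin 2) R).constr R (g P)

lemma T_monomial_one (d : Fin 2 →₀ ℕ) : T P (monomial d 1) = g P d := by
  have := (MvPolynomial.basisMonomials (Fin 2) R).constr_basis R (g P) d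
  rwa [coe_basisMonomials] at this

lemma monomial_one_eq (d : Fin 2 →₀ ℕ) :
    (monomial d 1 : MvPolynomial (Fin 2) R) = X 0 ^ d 0 * X 1 ^ d 1 := by
  rw [monomial_eq, C_1, one_mul, Finsupp.prod_fintype _ _ (fun i => pow_zero _)]
  exact Fin.prod_univ_two _

lemma T_X0_pow (k : ℕ) :
    T P ((X 0 : MvPolynomial (Fin 2) R) ^ k) = Finsupp.single (k : ℤ) 1 := by
  rw [X_pow_eq_monomial, T_monomial_one, g]
  simp

lemma T_X1_pow (k : ℕ) :
    T P ((X 1 : MvPolynomial (Fin 2) R) ^ k) = Finsupp.single (-(k : ℤ)) 1 := by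
  rw [X_pow_eq_monomial, T_monomial_one, g]
  simp

lemma mk_XY : Ideal.Quotient.mk (I P) (X 0 * X 1) = algebraMap R (Q P) P := by
  have h : Ideal.Quotient.mk (I P) ((X 0 : MvPolynomial (Fin 2) R) * X 1 - C P) = 0 :=
    Ideal.Quotient.eq_zero_iff_mem.mpr (Ideal.subset_span rfl)
  rw [map_sub, sub_eq_zero] at h
  rw [h, IsScalarTower.algebraMap_apply R (MvPolynomial (Fin 2) R) (Q P),
    MvPolynomial.algebraMap_eq]
  rfl

lemma mk_pow_pow (i j : ℕ) :
    Ideal.Quotient.mk (I P) ((X 0 : MvPolynomial (Fin 2) R) ^ i * X 1 ^ j) =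
      P ^ min i j • e P ((i : ℤ) - j) := by
  rcases le_total i j with h | h
  · have key : (X 0 : MvPolynomial (Fin 2) R) ^ i * X 1 ^ j
        = (X 0 * X 1) ^ i * X 1 ^ (j - i) := by
      rw [mul_pow, mul_assoc, ← pow_add, Nat.add_sub_cancel' h]
    have hij : (i : ℤ) - j = -((j - i : ℕ) : ℤ) := by
      push_cast [Nat.cast_sub h]; ring
    rw [key, map_mul, map_pow, mk_XY, hij, e_neg_coe, min_eq_left h, ← map_pow]
    exact (Algebra.smul_def _ _).symm
  · have key : (X 0 : MvPolynomial (Fin 2) R) ^ i * X 1 ^ j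
        = (X 0 * X 1) ^ j * X 0 ^ (i - j) := by
      rw [mul_pow]
      conv_lhs => rw [show i = j + (i - j) by omega]
      ring
    have hij : (i : ℤ) - j = ((i - j : ℕ) : ℤ) := by
      push_cast [Nat.cast_sub h]; ring
    rw [key, map_mul, map_pow, mk_XY, hij, e_coe, min_eq_right h, ← map_pow]
    exact (Algebra.smul_def _ _).symm

lemma T_mul_XY (c : MvPolynomial (Fin 2) R) :
    T P (X 0 * X 1 * c) = P • T P c := by
  have h : (T P) ∘ₗ LinearMap.mulLeft R ((X 0 : MvPolynomial (Fin 2) R) * X 1) = P • T P := by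
    apply (MvPolynomial.basisMonomials (Fin 2) R).ext
    intro d
    rw [coe_basisMonomials]
    have hX : (X 0 : MvPolynomial (Fin 2) R) * X 1 * monomial d 1
        = monomial (Finsupp.single 0 1 + Finsupp.single 1 1 + d) 1 := by
      rw [X, X, monomial_mul, monomial_mul, one_mul, one_mul]
    simp only [LinearMap.comp_apply, LinearMap.mulLeft_apply, LinearMap.smul_apply, hX,
      T_monomial_one]
    rw [g, g]
    have h0 : ((Finsupp.single (0 : Fin 2) (1 : ℕ) + Finsupp.single 1 1 + d) : Fin 2 →₀ ℕ) 0
        = d 0 + 1 := by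
      simp [Finsupp.add_apply, Finsupp.single_apply, Nat.add_comm]
    have h1 : ((Finsupp.single (0 : Fin 2) (1 : ℕ) + Finsupp.single 1 1 + d) : Fin 2 →₀ ℕ) 1
        = d 1 + 1 := by
      simp [Finsupp.add_apply, Finsupp.single_apply, Nat.add_comm]
    rw [h0, h1]
    have hmin : min (d 0 + 1) (d 1 + 1) = min (d 0) (d 1) + 1 := by omega
    have hsub : ((d 0 + 1 : ℕ) : ℤ) - ((d 1 + 1 : ℕ) : ℤ) = (d 0 : ℤ) - d 1 := by
      push_cast; ring
    rw [hmin, hsub, pow_succ, mul_comm, mul_smul]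
  simpa only [LinearMap.comp_apply, LinearMap.mulLeft_apply, LinearMap.smul_apply] using
    LinearMap.congr_fun h c

lemma T_vanish : ∀ f ∈ (I P).restrictScalars R, T P f = 0 := by
  intro f hf
  obtain ⟨c, rfl⟩ := Ideal.mem_span_singleton.mp hf
  rw [sub_mul, map_sub, T_mul_XY, ← smul_eq_C_mul, map_smul, sub_self]

/-- The normal form map on the quotient. -/
def Tbar : Q P →ₗ[R] (ℤ →₀ R) :=
  (Submodule.liftQ ((I P).restrictScalars R) (T P) (T_vanish P)) ∘ₗ
    (Submodule.Quotient.restrictScalarsEquiv R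
      ((I P : Submodule (MvPolynomial (Fin 2) R) (MvPolynomial (Fin 2) R)))).symm.toLinearMap

lemma Tbar_mk (f : MvPolynomial (Fin 2) R) :
    Tbar P (Ideal.Quotient.mk (I P) f) = T P f := rfl

/-- The section sending basis vectors to monomial classes. -/
def Smap : (ℤ →₀ R) →ₗ[R] Q P :=
  Finsupp.lsum R fun n => LinearMap.toSpanSingleton R (Q P) (e P n)

lemma Smap_single (n : ℤ) (r : R) : Smap P (Finsupp.single n r) = r • e P n := by
  rw [Smap, Finsupp.lsum_single, LinearMap.toSpanSingleton_apply]

lemma Tbar_Smap : Tbar P ∘ₗ Smap P = LinearMap.id := by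
  apply Finsupp.lhom_ext
  intro n r
  rw [LinearMap.comp_apply, Smap_single, map_smul, LinearMap.id_apply]
  rcases le_or_gt 0 n with h | h
  · have : e P n = Ideal.Quotient.mk (I P) ((X 0 : MvPolynomial (Fin 2) R) ^ n.toNat) := by
      rw [e, if_pos h]
    rw [this, Tbar_mk, T_X0_pow, Int.toNat_of_nonneg h, Finsupp.smul_single, smul_eq_mul, mul_one]
  · have : e P n = Ideal.Quotient.mk (I P) ((X 1 : MvPolynomial (Fin 2) R) ^ (-n).toNat) := by
      rw [e, if_neg (by omega)]
    rw [this, Tbar_mk, T_X1_pow, Int.toNat_of_nonneg (by omega : 0 ≤ -n), neg_neg,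
      Finsupp.smul_single, smul_eq_mul, mul_one]

lemma Smap_T (f : MvPolynomial (Fin 2) R) :
    Smap P (T P f) = Ideal.Quotient.mk (I P) f := by
  have h : Smap P ∘ₗ T P = (Ideal.Quotient.mkₐ R (I P)).toLinearMap := by
    apply (MvPolynomial.basisMonomials (Fin 2) R).ext
    intro d
    simp only [coe_basisMonomials, LinearMap.comp_apply, AlgHom.toLinearMap_apply,
      Ideal.Quotient.mkₐ_eq_mk]
    rw [T_monomial_one, g, map_smul, Smap_single, one_smul, monomial_one_eq, mk_pow_pow]
  exact congrArg (fun F => F f) h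

lemma Smap_Tbar : Smap P ∘ₗ Tbar P = LinearMap.id := by
  apply LinearMap.ext
  intro q
  obtain ⟨f, rfl⟩ := Ideal.Quotient.mk_surjective q
  rw [LinearMap.comp_apply, Tbar_mk, Smap_T, LinearMap.id_apply]

/-- The resulting linear equivalence. -/
def E : Q P ≃ₗ[R] (ℤ →₀ R) :=
  LinearEquiv.ofLinear (Tbar P) (Smap P) (Tbar_Smap P) (Smap_Tbar P)

/-- The basis of the quotient. -/
def basisQ : Module.Basis ℤ R (Q P) := Module.Basis.ofRepr (E P)

lemma basisQ_apply (n : ℤ) : basisQ P n = e P n := by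
  have : basisQ P n = (E P).symm (Finsupp.single n 1) := rfl
  rw [this]
  show Smap P (Finsupp.single n 1) = e P n
  rw [Smap_single, one_smul]

end XYQuotAux

end XYQuotAux

/-- For a commutative ring `R` and `P ∈ R`, the quotient `R[X,Y]/(XY - P)` is a free
`R`-module with basis the images of `{1} ∪ {X^i : i ≥ 1} ∪ {Y^j : j ≥ 1}` (indexed here
by `ℤ`, with `n ≥ 0` corresponding to `X^n` and `n < 0` to `Y^{-n}`); in particular it is
flat over `R`. -/
theorem quotient_XY_sub_C_free_and_flat {R : Type*} [CommRing R] (P : R) :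
    (∃ b : Module.Basis ℤ R
        (MvPolynomial (Fin 2) R ⧸
          Ideal.span {(X 0 : MvPolynomial (Fin 2) R) * X 1 - C P}),
      ∀ n : ℤ, b n = Ideal.Quotient.mk _
        (if 0 ≤ n then (X 0 : MvPolynomial (Fin 2) R) ^ n.toNat
          else (X 1 : MvPolynomial (Fin 2) R) ^ (-n).toNat)) ∧
    Module.Flat R
      (MvPolynomial (Fin 2) R ⧸
        Ideal.span {(X 0 : MvPolynomial (Fin 2) R) * X 1 - C P}) := by
  refine ⟨⟨XYQuotAux.basisQ P, fun n => ?_⟩, ?_⟩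
  · rw [XYQuotAux.basisQ_apply]; rfl
  · haveI : Module.Free R (XYQuotAux.Q P) := Module.Free.of_basis (XYQuotAux.basisQ P)
    exact Module.Flat.of_free
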